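/- Let A be an n-by-n reciprocal matrix with Perron eigenvalue ρ (the spectral radius). Then ρ ≥ n, and ρ = n if and only if A is consistent. -/
import Mathlib


open Matrix BigOperators Finset

/-- A positive square matrix is reciprocal if `A j i = 1 / A i j` for all `i, j`. -/
def IsReciprocal {n : ℕ} (A : Matrix (Fin n) (Fin n) ℝ) : Prop :=
  (∀ i j, 0 < A i j) ∧ ∀ i j, A j i = 1 / A i j

/-- A reciprocal matrix is consistent if `A i j * A j k = A i k` for all `i, j, k`. -/
def IsConsistent {n : ℕ} (A : Matrix (Fin n) (Fin n) ℝ) : Prop :=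
  IsReciprocal A ∧ ∀ i j k, A i j * A j k = A i k

/-- A vector is positive if all its entries are positive. -/
def PosVec {n : ℕ} (w : Fin n → ℝ) : Prop := ∀ i, 0 < w i

/-- A positive vector `w` is efficient for `A` if any positive vector `v` whose associated
consistent matrix approximates `A` at least as well as that of `w` (entrywise) is a positive
multiple of `w`. -/
def IsEfficient {n : ℕ} (A : Matrix (Fin n) (Fin n) ℝ) (w : Fin n → ℝ) : Prop :=
  PosVec w ∧ ∀ v : Fin n → ℝ, PosVec v →
    (∀ i j, |A i j - v i / v j| ≤ |A i j - w i / w j|) →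
    ∃ c : ℝ, 0 < c ∧ v = c • w

/-- The `i`-th row sum of a matrix. -/
noncomputable def rowSum {n : ℕ} (A : Matrix (Fin n) (Fin n) ℝ) (i : Fin n) : ℝ := ∑ j, A i j

/-- Given the row sums `r` in nonincreasing order (`r 0` the largest), the auxiliary function
`f(x) = 1/x + ∑_{i=2}^{k} 1/(r₁ - rᵢ + x) + 1 - r₁ - x` (note the `i = 1` term of the sum is
`1/x` since `r 0 - r 0 = 0`). -/
noncomputable def auxF {k : ℕ} (r : Fin (k + 1) → ℝ) (x : ℝ) : ℝ :=
  (∑ i, 1 / (r 0 - r i + x)) + 1 - r 0 - x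

/-- A reciprocal matrix `B` is well-behaved if, with row sums `r₁ ≥ ⋯ ≥ r_k`, either
`r₁ - r_k ≥ 1` (type I), or `r₁ - r_k < 1` and `f(1 + r_k - r₁) ≥ 0` (type II). -/
def WellBehaved {k : ℕ} (B : Matrix (Fin (k + 1)) (Fin (k + 1)) ℝ) : Prop :=
  ∃ σ : Equiv.Perm (Fin (k + 1)), Antitone (rowSum B ∘ σ) ∧
    (1 ≤ rowSum B (σ 0) - rowSum B (σ (Fin.last k)) ∨
      (rowSum B (σ 0) - rowSum B (σ (Fin.last k)) < 1 ∧
        0 ≤ auxF (rowSum B ∘ σ) (1 + rowSum B (σ (Fin.last k)) - rowSum B (σ 0))))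

/-- The Perron eigenvalue `ρ` of an `n × n` reciprocal matrix (the eigenvalue of its positive
eigenvector) satisfies `ρ ≥ n`, with `ρ = n` iff the matrix is consistent. -/
theorem stmt8 {n : ℕ} (hn : 0 < n) (A : Matrix (Fin n) (Fin n) ℝ) (hA : IsReciprocal A)
    (ρ : ℝ) (w : Fin n → ℝ) (hw : PosVec w) (heig : A.mulVec w = ρ • w) :
    (n : ℝ) ≤ ρ ∧ (ρ = (n : ℝ) ↔ IsConsistent A) := by
  obtain ⟨hpos, hrec⟩ := hA
  haveI : Nonempty (Fin n) := ⟨⟨0, hn⟩⟩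
  set f : Fin n → Fin n → ℝ := fun i j => A i j * w j / w i with hf
  have hfpos : ∀ i j, 0 < f i j := fun i j => by
    have h1 := hpos i j; have h2 := hw i; have h3 := hw j
    simp only [hf]; positivity
  have hAA : ∀ i j, A i j * A j i = 1 := fun i j => by
    rw [hrec i j]
    exact mul_one_div_cancel (hpos i j).ne'
  have hfmul : ∀ i j, f i j * f j i = 1 := fun i j => by
    have h2 := hw i
    have h3 := hw j
    have key : f i j * f j i = (A i j * A j i) * ((w j / w i) * (w i / w j)) := by
      simp only [hf]; ring
    rw [key, hAA i j, one_mul, div_mul_div_comm, mul_comm (w j) (w i)]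
    exact div_self (by positivity)
  have hsum : ∀ i, ∑ j, f i j = ρ := fun i => by
    have h1 : (∑ j, A i j * w j) = ρ * w i := by
      have := congrFun heig i
      simpa [Matrix.mulVec, dotProduct, smul_eq_mul] using this
    have h2 : ∑ j, f i j = (∑ j, A i j * w j) / w i := by
      simp only [hf]; rw [Finset.sum_div]
    rw [h2, h1, mul_div_assoc, div_self (hw i).ne', mul_one]
  have hS : ∑ i, ∑ j, f i j = (n : ℝ) * ρ := by
    simp [hsum, Finset.sum_const, Finset.card_univ, mul_comm]
  have hswap : ∑ i, ∑ j, f j i = ∑ i, ∑ j, f i j := Finset.sum_comm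
  have h2S : ∑ i, ∑ j, (f i j + f j i) = 2 * ((n : ℝ) * ρ) := by
    simp only [Finset.sum_add_distrib]
    rw [hswap, hS]; ring
  have hterm : ∀ i j, (2:ℝ) ≤ f i j + f j i := fun i j => by
    nlinarith [hfpos i j, hfpos j i, hfmul i j, sq_nonneg (f i j - f j i)]
  have hge : (2:ℝ) * ((n:ℝ) * (n:ℝ)) ≤ ∑ i, ∑ j, (f i j + f j i) := by
    have h := Finset.sum_le_sum (fun i (_ : i ∈ Finset.univ) =>
      Finset.sum_le_sum (fun j (_ : j ∈ Finset.univ) => hterm i j))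
    simpa [Finset.sum_const, Finset.card_univ, mul_comm, mul_assoc, mul_left_comm] using h
  have hnρ : (n : ℝ) ≤ ρ := by
    have hn' : (0:ℝ) < n := by exact_mod_cast hn
    nlinarith [h2S ▸ hge]
  refine ⟨hnρ, ?_, ?_⟩
  · -- ρ = n → consistent
    intro hρ
    have hzero : ∑ i, ∑ j, (f i j + f j i - 2) = 0 := by
      simp only [Finset.sum_sub_distrib, Finset.sum_const, Finset.card_univ,
        Fintype.card_fin, nsmul_eq_mul]
      rw [h2S, hρ]; push_cast; ring
    have hall : ∀ i j, f i j + f j i - 2 = 0 := by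
      intro i j
      have h1 : ∀ i ∈ Finset.univ, (0:ℝ) ≤ ∑ j, (f i j + f j i - 2) :=
        fun i _ => Finset.sum_nonneg fun j _ => by linarith [hterm i j]
      have h2 := (Finset.sum_eq_zero_iff_of_nonneg h1).mp hzero i (Finset.mem_univ i)
      have h3 : ∀ j ∈ Finset.univ, (0:ℝ) ≤ f i j + f j i - 2 :=
        fun j _ => by linarith [hterm i j]
      exact (Finset.sum_eq_zero_iff_of_nonneg h3).mp h2 j (Finset.mem_univ j)
    have hfone : ∀ i j, f i j = 1 := by
      intro i j
      have h1 := hall i j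
      have h2 := hfmul i j
      have h3 := hfpos i j
      have h4 : (f i j - 1)^2 = 0 := by nlinarith
      have := pow_eq_zero_iff (n := 2) (by norm_num) |>.mp h4
      linarith
    have hAw : ∀ i j, A i j = w i / w j := fun i j => by
      have h1 := hfone i j
      have h2 := (hw i).ne'
      have h3 := (hw j).ne'
      simp only [hf] at h1
      field_simp at h1 ⊢
      linarith
    exact ⟨⟨hpos, hrec⟩, fun i j k => by
      have h2 := (hw i).ne'
      have h3 := (hw j).ne'
      have h4 := (hw k).ne'
      rw [hAw i j, hAw j k, hAw i k, div_mul_div_comm, mul_comm (w i) (w j),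
        mul_div_mul_left _ _ h3]⟩
  · -- consistent → ρ = n
    rintro ⟨_, hcons⟩
    set i0 : Fin n := ⟨0, hn⟩ with hi0
    have hu : ∀ i, 0 < A i i0 := fun i => hpos i i0
    have hAij : ∀ i j, A i j = A i i0 / A j i0 := fun i j => by
      rw [eq_div_iff (hu j).ne']
      exact hcons i j i0
    set S : ℝ := ∑ j, w j / A j i0 with hSdef
    have hSpos : 0 < S := Finset.sum_pos (fun j _ => div_pos (hw j) (hu j))
      Finset.univ_nonempty
    have heq : ∀ i, ρ * w i = A i i0 * S := fun i => by
      have h1 : (∑ j, A i j * w j) = ρ * w i := by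
        have := congrFun heig i
        simpa [Matrix.mulVec, dotProduct, smul_eq_mul] using this
      rw [← h1, hSdef, Finset.mul_sum]
      exact Finset.sum_congr rfl fun j _ => by
        rw [hAij i j, div_mul_eq_mul_div, mul_div_assoc]
    have hρpos : 0 < ρ := by
      have h := heq i0
      nlinarith [mul_pos (hu i0) hSpos, hw i0]
    have hwj : ∀ j, w j / A j i0 = S / ρ := fun j => by
      rw [div_eq_div_iff (hu j).ne' hρpos.ne']
      linear_combination heq j
    have hfin : S = (n : ℝ) * (S / ρ) := by
      calc S = ∑ j : Fin n, (S / ρ) := Finset.sum_congr rfl fun j _ => hwj j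
        _ = (n : ℝ) * (S / ρ) := by
            simp [Finset.sum_const, Finset.card_univ, mul_comm]
    have h2 : ρ * S = (n : ℝ) * S := by
      conv_lhs => rw [hfin]
      field_simp
    exact mul_right_cancel₀ hSpos.ne' h2
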